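/- Let X be a real normed space, fix real numbers α, η, β with 1 < α < η < β and a constant C > 0, and let N, A, B : X → ℝ satisfy C⁻¹‖u‖^η ≤ N(u) ≤ C‖u‖^η, |A(u)| ≤ C‖u‖^α and |B(u)| ≤ C‖u‖^β for all u ∈ X. Assume condition (C4): for every bounded sequence (u_n) in X with A(u_n) > 0 for all n and A(u_n) → 0, one has B(u_n) → 0. Then for every R > 0 there exists δ > 0 such that every u ∈ X with ‖u‖ ≤ R, A(u) > 0 and (η−α)N(u) < (β−α)B(u) satisfies A(u) ≥ δ; that is, A is bounded away from zero on bounded subsets of the Nehari set N_c⁻. -/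

import Mathlib

open Filter Topology

/-- Under the growth conditions `C⁻¹‖u‖^η ≤ N(u) ≤ C‖u‖^η`,
`|A(u)| ≤ C‖u‖^α`, `|B(u)| ≤ C‖u‖^β` (`1 < α < η < β`) and condition (C4)
(for bounded sequences with `A(u_n) > 0`, `A(u_n) → 0` forces `B(u_n) → 0`),
the functional `A` is bounded away from zero on bounded subsets of the Nehari
set `N_c⁻`: for every `R > 0` there is `δ > 0` such that `‖u‖ ≤ R`, `A(u) > 0`
and `(η−α)N(u) < (β−α)B(u)` imply `A(u) ≥ δ`. -/
theorem stmt19 {X : Type*} [NormedAddCommGroup X] [NormedSpace ℝ X]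
    (α η β C : ℝ) (h1 : 1 < α) (h2 : α < η) (h3 : η < β) (hC : 0 < C)
    (N A B : X → ℝ)
    (hNlow : ∀ u : X, C⁻¹ * ‖u‖ ^ η ≤ N u) (hNup : ∀ u : X, N u ≤ C * ‖u‖ ^ η)
    (hA : ∀ u : X, |A u| ≤ C * ‖u‖ ^ α)
    (hB : ∀ u : X, |B u| ≤ C * ‖u‖ ^ β)
    (hC4 : ∀ u : ℕ → X, (∃ R : ℝ, ∀ n, ‖u n‖ ≤ R) → (∀ n, 0 < A (u n)) →
      Tendsto (fun n => A (u n)) atTop (𝓝 0) → Tendsto (fun n => B (u n)) atTop (𝓝 0)) :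
    ∀ R : ℝ, 0 < R → ∃ δ : ℝ, 0 < δ ∧ ∀ u : X, ‖u‖ ≤ R → 0 < A u →
      (η - α) * N u < (β - α) * B u → δ ≤ A u := by
  intro R hR
  have hηα : 0 < η - α := by linarith
  have hβα : 0 < β - α := by linarith
  have hβη : 0 < β - η := by linarith
  -- the constant K and the lower norm bound m
  set K : ℝ := C * C * (β - α) / (η - α) with hK
  have hKpos : 0 < K := by positivity
  set m : ℝ := (1 / K) ^ (1 / (β - η)) with hm
  have hmpos : 0 < m := Real.rpow_pos_of_pos (by positivity) _
  have hmpow : m ^ (β - η) = 1 / K := by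
    rw [hm, ← Real.rpow_mul (by positivity : (0:ℝ) ≤ 1 / K),
      one_div_mul_cancel (ne_of_gt hβη), Real.rpow_one]
  -- key: on the relevant set, B u is bounded below by ε
  set ε : ℝ := (η - α) / ((β - α) * C) * m ^ η with hε
  have hεpos : 0 < ε := by
    have : (0:ℝ) < m ^ η := Real.rpow_pos_of_pos hmpos _
    positivity
  have key : ∀ u : X, 0 < A u → (η - α) * N u < (β - α) * B u → ε < B u := by
    intro u hAu hNe
    have hupos : 0 < ‖u‖ := by
      rcases eq_or_lt_of_le (norm_nonneg u) with h | h
      · exfalso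
        have := (abs_le.mp (hA u)).2
        rw [← h] at this
        simp [Real.zero_rpow (by linarith : α ≠ 0)] at this
        linarith
      · exact h
    -- ‖u‖^η < K * ‖u‖^β
    have hstep : ‖u‖ ^ η < K * ‖u‖ ^ β := by
      have hNu : C⁻¹ * ‖u‖ ^ η ≤ N u := hNlow u
      have hBu : B u ≤ C * ‖u‖ ^ β := (abs_le.mp (hB u)).2
      have : (η - α) * (C⁻¹ * ‖u‖ ^ η) < (β - α) * (C * ‖u‖ ^ β) := by
        calc (η - α) * (C⁻¹ * ‖u‖ ^ η) ≤ (η - α) * N u := by nlinarith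
          _ < (β - α) * B u := hNe
          _ ≤ (β - α) * (C * ‖u‖ ^ β) := by nlinarith
      rw [hK]
      have hCinv : 0 < C⁻¹ := by positivity
      rw [div_mul_eq_mul_div, lt_div_iff₀ hηα]
      calc ‖u‖ ^ η * (η - α) = C * ((η - α) * (C⁻¹ * ‖u‖ ^ η)) := by
            field_simp
        _ < C * ((β - α) * (C * ‖u‖ ^ β)) := by
            exact mul_lt_mul_of_pos_left this hC
        _ = C * C * (β - α) * ‖u‖ ^ β := by ring
    -- hence m < ‖u‖
    have hmle : m ≤ ‖u‖ := by
      by_contra hlt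
      push_neg at hlt
      have h1' : ‖u‖ ^ (β - η) < m ^ (β - η) :=
        Real.rpow_lt_rpow (norm_nonneg u) hlt hβη
      rw [hmpow] at h1'
      have hsplit : ‖u‖ ^ β = ‖u‖ ^ η * ‖u‖ ^ (β - η) := by
        rw [← Real.rpow_add hupos]; ring_nf
      rw [hsplit] at hstep
      have hηpos : (0:ℝ) < ‖u‖ ^ η := Real.rpow_pos_of_pos hupos _
      have : ‖u‖ ^ η < ‖u‖ ^ η * (K * (1/K)) := by
        calc ‖u‖ ^ η < K * (‖u‖ ^ η * ‖u‖ ^ (β - η)) := hstep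
          _ ≤ K * (‖u‖ ^ η * (1/K)) := by nlinarith [mul_lt_mul_of_pos_left h1' hηpos, hKpos]
          _ = ‖u‖ ^ η * (K * (1/K)) := by ring
      rw [mul_one_div_cancel (ne_of_gt hKpos), mul_one] at this
      exact lt_irrefl _ this
    -- conclude ε < B u
    have hNlb : (η - α) / ((β - α) * C) * m ^ η ≤ (η - α) / (β - α) * N u := by
      have hmη : m ^ η ≤ ‖u‖ ^ η :=
        Real.rpow_le_rpow (le_of_lt hmpos) hmle (by linarith)
      have hNu : C⁻¹ * ‖u‖ ^ η ≤ N u := hNlow u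
      have : (η - α) / ((β - α) * C) * m ^ η ≤ (η - α) / ((β - α) * C) * ‖u‖ ^ η := by
        have : (0:ℝ) < (η - α) / ((β - α) * C) := by positivity
        nlinarith
      calc (η - α) / ((β - α) * C) * m ^ η
          ≤ (η - α) / ((β - α) * C) * ‖u‖ ^ η := this
        _ = (η - α) / (β - α) * (C⁻¹ * ‖u‖ ^ η) := by field_simp
        _ ≤ (η - α) / (β - α) * N u := by
            have : (0:ℝ) < (η - α) / (β - α) := by positivity
            nlinarith
    have hBlb : (η - α) / (β - α) * N u < B u := by
      rw [div_mul_eq_mul_div, div_lt_iff₀ hβα]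
      linarith [hNe]
    exact lt_of_le_of_lt hNlb hBlb
  -- main argument by contradiction
  by_contra hcon
  push_neg at hcon
  choose u hu1 hu2 hu3 hu4 using fun n : ℕ => hcon (1 / (n + 1)) (by positivity)
  have hbd : ∃ R' : ℝ, ∀ n, ‖u n‖ ≤ R' := ⟨R, hu1⟩
  have hA0 : Tendsto (fun n => A (u n)) atTop (𝓝 0) := by
    have h₁ : Tendsto (fun n : ℕ => 1 / ((n:ℝ) + 1)) atTop (𝓝 0) :=
      tendsto_one_div_add_atTop_nhds_zero_nat
    refine squeeze_zero (fun n => le_of_lt (hu2 n)) (fun n => le_of_lt (hu4 n)) h₁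
  have hB0 := hC4 u hbd hu2 hA0
  have := hB0.eventually_lt_const hεpos
  rcases this.exists with ⟨n, hn⟩
  exact absurd (key (u n) (hu2 n) (hu3 n)) (not_lt.mpr (le_of_lt hn))
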